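/- Let R be a Dedekind domain, I a nonzero ideal of R, and M a cyclic torsion R-module. Then there exists a surjective R-linear map from I to M. -/

import Mathlib

open UniqueFactorizationMonoid in
theorem aux_avoid {R : Type*} [CommRing R] [IsDomain R] [IsDedekindDomain R]
    (I N : Ideal R) (hI : I ≠ ⊥) (hN : N ≠ ⊥) :
    ∃ a ∈ I, ∀ P : Ideal R, P.IsPrime → N ≤ P → a ∉ I * P := by
  classical
  set s := (normalizedFactors (I * N)).toFinset with hs
  have hIN : I * N ≠ 0 := mul_ne_zero hI hN
  have hprime : ∀ P ∈ s, Prime P := fun P hP =>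
    prime_of_normalized_factor P (Multiset.mem_toFinset.mp hP)
  set c : Ideal R → ℕ := fun P => (normalizedFactors I).count P with hc
  have hex : ∀ P ∈ s, ∃ x ∈ P ^ c P, x ∉ P ^ (c P + 1) := fun P hP =>
    Ideal.exists_mem_pow_notMem_pow_succ P (hprime P hP).ne_zero
      (fun h => (hprime P hP).not_isUnit (Ideal.isUnit_iff.mpr h)) (c P)
  choose! a ha ha' using hex
  obtain ⟨y, hy⟩ := IsDedekindDomain.exists_forall_sub_mem_ideal (s := s) (fun P => P)
    (fun P => c P + 1) hprime (fun _ _ _ _ h => h) (fun P => a P)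
  have hyP : ∀ P ∈ s, y ∈ P ^ c P := by
    intro P hP
    have h1 : y - a P ∈ P ^ (c P + 1) := hy P hP
    have := Ideal.pow_le_pow_right (Nat.le_succ (c P)) h1
    simpa using add_mem this (ha P hP)
  have hprodI : (∏ P ∈ s, P ^ c P) = I := by
    have hsub : (normalizedFactors I).toFinset ⊆ s := by
      apply Multiset.toFinset_subset.mpr
      exact Multiset.subset_of_le
        ((dvd_iff_normalizedFactors_le_normalizedFactors hI hIN).mp (dvd_mul_right I N))
    rw [← Finset.prod_subset hsub (fun P _ hP => by
      rw [hc]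
      simp [Multiset.count_eq_zero_of_notMem (fun h => hP (Multiset.mem_toFinset.mpr h))])]
    calc (∏ P ∈ (normalizedFactors I).toFinset, P ^ c P)
        = ((normalizedFactors I).map id).prod :=
          (Finset.prod_multiset_map_count (normalizedFactors I) id).symm
      _ = I := by
          rw [Multiset.map_id]
          exact associated_iff_eq.mp (prod_normalizedFactors hI)
  have hyI : y ∈ I := by
    rw [← hprodI, ← IsDedekindDomain.inf_prime_pow_eq_prod s (fun P => P) c hprime
      (fun _ _ _ _ h => h)]
    exact Submodule.mem_finsetInf.mpr hyP
  refine ⟨y, hyI, ?_⟩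
  intro P hPp hNP hmem
  have hPbot : P ≠ ⊥ := fun h => hN (le_bot_iff.mp (h ▸ hNP))
  have hPs : P ∈ s := by
    obtain ⟨Q, hQ, hQP⟩ := exists_mem_normalizedFactors_of_dvd hIN
      (Ideal.prime_of_isPrime hPbot hPp).irreducible
      ((Ideal.dvd_iff_le.mpr hNP).trans (dvd_mul_left N I))
    rw [Multiset.mem_toFinset]
    rwa [associated_iff_eq.mp hQP]
  have hIc : I ≤ P ^ c P := by
    have h3 : (Multiset.replicate (c P) P).prod ∣ (normalizedFactors I).prod :=
      Multiset.prod_dvd_prod_of_le (Multiset.le_count_iff_replicate_le.mp le_rfl)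
    rw [Multiset.prod_replicate, associated_iff_eq.mp (prod_normalizedFactors hI)] at h3
    exact Ideal.dvd_iff_le.mp h3
  have h2 : I * P ≤ P ^ (c P + 1) := by
    rw [pow_succ]
    exact Ideal.mul_mono hIc le_rfl
  have : a P ∈ P ^ (c P + 1) := by
    have := sub_mem (h2 hmem) (hy P hPs)
    simpa using this
  exact ha' P hPs this

/-- If `I` is a nonzero ideal of a Dedekind domain `R` and `M` is a cyclic torsion
`R`-module, then there is a surjective `R`-linear map from `I` to `M`. -/
theorem stmt_12 {R M : Type*} [CommRing R] [IsDomain R] [IsDedekindDomain R]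
    [AddCommGroup M] [Module R M]
    (I : Ideal R) (hI : I ≠ ⊥)
    (hcyc : ∃ x : M, Submodule.span R {x} = ⊤)
    (htor : ∀ x : M, ∃ r : R, r ≠ 0 ∧ r • x = 0) :
    ∃ f : ↥I →ₗ[R] M, Function.Surjective f := by
  classical
  obtain ⟨x, hx⟩ := hcyc
  by_cases htriv : ∀ y : M, y = 0
  · exact ⟨0, fun y => ⟨0, by simp [htriv y]⟩⟩
  push_neg at htriv
  obtain ⟨y0, hy0⟩ := htriv
  have hx0 : x ≠ 0 := by
    rintro rfl
    apply hy0
    have : y0 ∈ Submodule.span R ({0} : Set M) := hx ▸ Submodule.mem_top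
    simpa using this
  obtain ⟨r, hr0, hrx⟩ := htor x
  set N : Ideal R := Ideal.span {r} with hNdef
  have hN : N ≠ ⊥ := by
    simp [hNdef, Ideal.span_singleton_eq_bot, hr0]
  have hNann : ∀ j ∈ N, j • x = 0 := by
    intro j hj
    obtain ⟨t, rfl⟩ := Ideal.mem_span_singleton.mp hj
    rw [mul_comm, mul_smul, hrx, smul_zero]
  have hNtop : N ≠ ⊤ := by
    intro h
    have : (1 : R) • x = 0 := hNann 1 (h ▸ Submodule.mem_top)
    simpa [hx0] using this
  obtain ⟨a, haI, ha⟩ := aux_avoid I N hI hN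
  have ha0 : a ≠ 0 := by
    obtain ⟨P, hPm, hNP⟩ := Ideal.exists_le_maximal N hNtop
    intro h
    exact ha P hPm.isPrime hNP (h ▸ (I * P).zero_mem)
  obtain ⟨C, hC⟩ : I ∣ Ideal.span {a} :=
    Ideal.dvd_iff_le.mpr ((Ideal.span_singleton_le_iff_mem _).mpr haI)
  have hCN : C ⊔ N = ⊤ := by
    by_contra h
    obtain ⟨P, hPm, hP⟩ := Ideal.exists_le_maximal _ h
    refine ha P hPm.isPrime (le_trans le_sup_right hP) ?_
    have : Ideal.span {a} ≤ I * P :=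
      hC ▸ Ideal.mul_mono le_rfl (le_trans le_sup_left hP)
    exact this (Ideal.mem_span_singleton_self a)
  obtain ⟨c, hc, j, hj, hcj⟩ := Submodule.mem_sup.mp (hCN ▸ Submodule.mem_top (x := (1:R)))
  -- for each y ∈ I, c * y ∈ span {a}
  have key : ∀ y : ↥I, ∃ t : R, c * (y : R) = t * a := by
    intro y
    have : c * (y : R) ∈ Ideal.span {a} := by
      rw [hC, mul_comm I C]
      exact Ideal.mul_mem_mul hc y.2
    obtain ⟨t, ht⟩ := Ideal.mem_span_singleton'.mp this
    exact ⟨t, ht.symm⟩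
  choose g hg using key
  have hgadd : ∀ y z : ↥I, g (y + z) = g y + g z := by
    intro y z
    apply mul_right_cancel₀ ha0
    rw [← hg (y + z), add_mul, ← hg y, ← hg z]
    push_cast
    ring
  have hgsmul : ∀ (t : R) (y : ↥I), g (t • y) = t * g y := by
    intro t y
    apply mul_right_cancel₀ ha0
    rw [← hg (t • y), mul_assoc, ← hg y]
    have : ((t • y : ↥I) : R) = t * (y : R) := rfl
    rw [this]
    ring
  set f : ↥I →ₗ[R] M :=
    { toFun := fun y => g y • x
      map_add' := fun y z => by
        show g (y + z) • x = g y • x + g z • x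
        rw [hgadd, add_smul]
      map_smul' := fun t y => by
        show g (t • y) • x = t • (g y • x)
        rw [hgsmul, mul_smul] }
  have hfa : f ⟨a, haI⟩ = x := by
    have h2 : g ⟨a, haI⟩ = c := mul_right_cancel₀ ha0 (hg ⟨a, haI⟩).symm
    show g ⟨a, haI⟩ • x = x
    rw [h2]
    calc c • x = (c + j) • x := by rw [add_smul, hNann j hj, add_zero]
      _ = x := by rw [hcj, one_smul]
  refine ⟨f, fun z => ?_⟩
  have hz : z ∈ Submodule.span R ({x} : Set M) := hx ▸ Submodule.mem_top
  obtain ⟨t, ht⟩ := Submodule.mem_span_singleton.mp hz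
  exact ⟨t • ⟨a, haI⟩, by rw [map_smul, hfa, ht]⟩
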